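/- Let d ≥ 1, r ≥ 2, and let A_0, …, A_{r-1} ∈ M_d(ℂ) be pairwise commuting Hermitian d × d matrices. Let V_0, …, V_{r-1} ∈ M_d(ℂ) be arbitrary, and define the matrix sequence (Y_n)_{n≥0} by Y_i = V_i for i = 0, …, r−1 and Y_n = A_0 Y_{n-1} + A_1 Y_{n-2} + ⋯ + A_{r-1} Y_{n-r} for n ≥ r. Then for every n ≥ r, Y_n = Σ_{s=0}^{r-1} ρ(n−s, r; A) W_s, where W_s := Σ_{j=s}^{r-1} A_j V_{s+r-1-j} for s = 0, …, r−1. -/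

import Mathlib

open Finset

/-- The combinatorial matrix coefficient `ρ(m, r; A)`: the sum, over multi-indices
`k = (k₀, …, k_{r-1}) ∈ ℤ₊ʳ` with `1·k₀ + 2·k₁ + ⋯ + r·k_{r-1} = m − r`, of the multinomial
coefficient `(k₀+⋯+k_{r-1})! / (k₀!⋯k_{r-1}!)` times `A₀^{k₀} ⋯ A_{r-1}^{k_{r-1}}`,
with the convention `ρ(m, r; A) = 0` for `m < r` (and in particular `ρ(r, r; A) = I`). -/
noncomputable def rho {R : Type*} [Ring R] (r : ℕ) (A : ℕ → R) (m : ℕ) : R :=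
  if m < r then 0
  else ∑ k ∈ (Fintype.piFinset fun _ : Fin r => Finset.range (m - r + 1)).filter
      (fun k : Fin r → ℕ => ∑ j : Fin r, ((j : ℕ) + 1) * k j = m - r),
    (Nat.multinomial Finset.univ k : R) * (List.ofFn fun j : Fin r => A (j : ℕ) ^ k j).prod

open Nat

lemma list_set_self {M : Type*} (l : List M) (n : ℕ) (hn : n < l.length) :
    l.set n l[n] = l := by
  apply List.ext_getElem (by simp)
  intro i h1 h2
  rw [List.getElem_set]
  split
  · simp_all
  · rfl

lemma mul_list_prod_set {M : Type*} [Monoid M] (l : List M) (n : ℕ) (hn : n < l.length)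
    (x : M) (hx : ∀ y ∈ l, Commute x y) :
    x * l.prod = (l.set n (x * l[n])).prod := by
  have hc : Commute x (l.take n).prod :=
    Commute.list_prod_right _ _ fun y hy => hx y (List.mem_of_mem_take hy)
  conv_lhs => rw [← list_set_self l n hn]
  rw [List.prod_set, List.prod_set, if_pos hn, if_pos hn, ← mul_assoc, ← mul_assoc,
    ← mul_assoc, hc.eq]

lemma mul_prod_pow {M : Type*} [Monoid M] {r : ℕ} (A : ℕ → M)
    (hc : ∀ i j : Fin r, Commute (A i) (A j)) (k : Fin r → ℕ) (j : Fin r) :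
    A j * (List.ofFn fun i : Fin r => A (i : ℕ) ^ k i).prod =
      (List.ofFn fun i : Fin r => A (i : ℕ) ^ (Function.update k j (k j + 1)) i).prod := by
  have hn : (j : ℕ) < (List.ofFn fun i : Fin r => A (i : ℕ) ^ k i).length := by
    simp [j.isLt]
  rw [mul_list_prod_set _ _ hn]
  · congr 1
    apply List.ext_getElem (by simp)
    intro i h1 h2
    simp only [List.length_set, List.length_ofFn] at h1 h2 ⊢
    rw [List.getElem_set]
    split
    · rename_i h
      subst h
      simp only [List.getElem_ofFn]
      have hj : (⟨(j : ℕ), h2⟩ : Fin r) = j := by ext; rfl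
      rw [hj, Function.update_self, _root_.pow_succ']
    · rename_i h
      simp only [List.getElem_ofFn]
      rw [Function.update_of_ne (by simp [Fin.ext_iff]; omega)]
  · intro y hy
    rw [List.mem_ofFn] at hy
    obtain ⟨i, rfl⟩ := hy
    exact (hc j i).pow_right _

lemma claimA {ι : Type*} [Fintype ι] [DecidableEq ι] (k : ι → ℕ) (j : ι) (hj : k j ≠ 0) :
    Nat.multinomial univ (Function.update k j (k j - 1)) * ∏ i, (k i)! =
    k j * (∑ i, k i - 1)! := by
  have hfun : (fun i => (Function.update k j (k j - 1) i)!) =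
      Function.update (fun i => (k i)!) j ((k j - 1)!) := by
    funext i; rcases eq_or_ne i j with rfl | h
    · simp
    · simp [Function.update_of_ne h]
  have hprod : ∏ i, (Function.update k j (k j - 1) i)! =
      (k j - 1)! * ∏ i ∈ univ.erase j, (k i)! := by
    calc ∏ i, (Function.update k j (k j - 1) i)!
        = ∏ i, Function.update (fun i => (k i)!) j ((k j - 1)!) i := by rw [hfun]
      _ = _ := by
          rw [Finset.prod_update_of_mem (Finset.mem_univ j), sdiff_singleton_eq_erase]
  have hsum : ∑ i, Function.update k j (k j - 1) i = (∑ i, k i) - 1 := by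
    rw [Finset.sum_update_of_mem (Finset.mem_univ j), sdiff_singleton_eq_erase]
    have h2 : k j + ∑ i ∈ univ.erase j, k i = ∑ i, k i := Finset.add_sum_erase univ k (Finset.mem_univ j)
    omega
  have hspec := Nat.multinomial_spec univ (Function.update k j (k j - 1))
  have hkfac : ∏ i, (k i)! = k j * ((k j - 1)! * ∏ i ∈ univ.erase j, (k i)!) := by
    rw [← Finset.mul_prod_erase univ (fun i => (k i)!) (Finset.mem_univ j), ← mul_assoc,
      Nat.mul_factorial_pred hj]
  calc Nat.multinomial univ (Function.update k j (k j - 1)) * ∏ i, (k i)!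
      = k j * ((∏ i, (Function.update k j (k j - 1) i)!) *
          Nat.multinomial univ (Function.update k j (k j - 1))) := by
        rw [hkfac, hprod]; ring
    _ = k j * (∑ i, k i - 1)! := by rw [hspec, hsum]

lemma multinomial_rec {ι : Type*} [Fintype ι] [DecidableEq ι] (k : ι → ℕ) (hk : ∃ j, k j ≠ 0) :
    Nat.multinomial univ k =
      ∑ j ∈ univ.filter fun j => k j ≠ 0, Nat.multinomial univ (Function.update k j (k j - 1)) := by
  have hpos : 0 < ∏ i, (k i)! := Finset.prod_pos fun i _ => Nat.factorial_pos _
  have hspos : 0 < ∑ i, k i := by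
    obtain ⟨j, hj⟩ := hk
    exact lt_of_lt_of_le (Nat.pos_of_ne_zero hj) (Finset.single_le_sum (fun i _ => Nat.zero_le _) (Finset.mem_univ j))
  apply Nat.eq_of_mul_eq_mul_right hpos
  rw [Finset.sum_mul]
  calc Nat.multinomial univ k * ∏ i, (k i)!
      = (∑ i, k i)! := by rw [mul_comm]; exact Nat.multinomial_spec univ k
    _ = (∑ i, k i) * (∑ i, k i - 1)! := (Nat.mul_factorial_pred hspos.ne').symm
    _ = (∑ j ∈ univ.filter fun j => k j ≠ 0, k j) * (∑ i, k i - 1)! := by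
        rw [Finset.sum_filter_ne_zero]
    _ = ∑ j ∈ univ.filter fun j => k j ≠ 0, k j * (∑ i, k i - 1)! := by rw [Finset.sum_mul]
    _ = _ := by
        refine Finset.sum_congr rfl fun j hj => ?_
        rw [Finset.mem_filter] at hj
        exact (claimA k j hj.2).symm
lemma mem_S {r t : ℕ} (k : Fin r → ℕ) :
    k ∈ (Fintype.piFinset fun _ : Fin r => Finset.range (t + 1)).filter
      (fun k : Fin r → ℕ => ∑ j : Fin r, ((j : ℕ) + 1) * k j = t) ↔
      ∑ j : Fin r, ((j : ℕ) + 1) * k j = t := by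
  simp only [Finset.mem_filter, Fintype.mem_piFinset, Finset.mem_range]
  constructor
  · tauto
  · intro h
    refine ⟨fun j => ?_, h⟩
    have h1 : ((j : ℕ) + 1) * k j ≤ t := h ▸ Finset.single_le_sum
      (f := fun i : Fin r => ((i : ℕ) + 1) * k i) (fun i _ => Nat.zero_le _) (Finset.mem_univ j)
    have h2 : k j ≤ ((j : ℕ) + 1) * k j := Nat.le_mul_of_pos_left _ (Nat.succ_pos _)
    omega

lemma rho_of_lt {R : Type*} [Ring R] {r : ℕ} (A : ℕ → R) {m : ℕ} (h : m < r) :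
    rho r A m = 0 := by rw [rho, if_pos h]

lemma rho_eq_sum {R : Type*} [Ring R] {r : ℕ} (A : ℕ → R) {m : ℕ} (h : r ≤ m) :
    rho r A m = ∑ k ∈ (Fintype.piFinset fun _ : Fin r => Finset.range (m - r + 1)).filter
      (fun k : Fin r → ℕ => ∑ j : Fin r, ((j : ℕ) + 1) * k j = m - r),
    (Nat.multinomial Finset.univ k : R) * (List.ofFn fun j : Fin r => A (j : ℕ) ^ k j).prod := by
  rw [rho, if_neg (by omega)]

lemma rho_self {R : Type*} [Ring R] {r : ℕ} (A : ℕ → R) : rho r A r = 1 := by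
  rw [rho_eq_sum A le_rfl, Nat.sub_self]
  have hset : (Fintype.piFinset fun _ : Fin r => Finset.range (0 + 1)).filter
      (fun k : Fin r → ℕ => ∑ j : Fin r, ((j : ℕ) + 1) * k j = 0) = {fun _ => 0} := by
    ext k
    rw [mem_S, Finset.mem_singleton]
    constructor
    · intro h
      funext j
      have h1 : ((j : ℕ) + 1) * k j ≤ 0 := h ▸ Finset.single_le_sum
        (f := fun i : Fin r => ((i : ℕ) + 1) * k i) (fun i _ => Nat.zero_le _) (Finset.mem_univ j)
      have h2 : k j ≤ ((j : ℕ) + 1) * k j := Nat.le_mul_of_pos_left _ (Nat.succ_pos _)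
      omega
    · rintro rfl; simp
  rw [hset, Finset.sum_singleton]
  simp [Nat.multinomial, List.prod_eq_one]

lemma wt_update {r : ℕ} (k : Fin r → ℕ) (j : Fin r) (v : ℕ) :
    ∑ i : Fin r, ((i : ℕ) + 1) * Function.update k j v i
      = ((j : ℕ) + 1) * v + ∑ i ∈ univ.erase j, ((i : ℕ) + 1) * k i := by
  have hfun : (fun i : Fin r => ((i : ℕ) + 1) * Function.update k j v i)
      = Function.update (fun i : Fin r => ((i : ℕ) + 1) * k i) j (((j : ℕ) + 1) * v) := by
    funext i; rcases eq_or_ne i j with rfl | h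
    · simp
    · simp [Function.update_of_ne h]
  calc ∑ i : Fin r, ((i : ℕ) + 1) * Function.update k j v i
      = ∑ i : Fin r, Function.update (fun i : Fin r => ((i : ℕ) + 1) * k i) j
          (((j : ℕ) + 1) * v) i := by rw [hfun]
    _ = _ := by
        rw [Finset.sum_update_of_mem (Finset.mem_univ j), sdiff_singleton_eq_erase]

lemma wt_split {r : ℕ} (k : Fin r → ℕ) (j : Fin r) :
    ∑ i : Fin r, ((i : ℕ) + 1) * k i
      = ((j : ℕ) + 1) * k j + ∑ i ∈ univ.erase j, ((i : ℕ) + 1) * k i :=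
  (Finset.add_sum_erase univ _ (Finset.mem_univ j)).symm

lemma key_step {R : Type*} [Ring R] {r : ℕ} (A : ℕ → R)
    (hc : ∀ i j : Fin r, Commute (A i) (A j)) (k : Fin r → ℕ) (hk : ∃ j, k j ≠ 0) :
    (Nat.multinomial Finset.univ k : R) * (List.ofFn fun i : Fin r => A (i : ℕ) ^ k i).prod
      = ∑ j ∈ univ.filter (fun j : Fin r => k j ≠ 0),
          (Nat.multinomial Finset.univ (Function.update k j (k j - 1)) : R) *
            (A (j : ℕ) *
              (List.ofFn fun i : Fin r =>
                A (i : ℕ) ^ (Function.update k j (k j - 1)) i).prod) := by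
  have hAP : ∀ j ∈ univ.filter (fun j : Fin r => k j ≠ 0),
      A (j : ℕ) * (List.ofFn fun i : Fin r =>
          A (i : ℕ) ^ (Function.update k j (k j - 1)) i).prod
        = (List.ofFn fun i : Fin r => A (i : ℕ) ^ k i).prod := by
    intro j hj
    rw [Finset.mem_filter] at hj
    have hupd : Function.update (Function.update k j (k j - 1)) j
        (Function.update k j (k j - 1) j + 1) = k := by
      rw [Function.update_self, show k j - 1 + 1 = k j from by
        have := Nat.pos_of_ne_zero hj.2; omega, Function.update_idem, Function.update_eq_self]
    rw [mul_prod_pow A hc]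
    simp only [hupd]
  calc (Nat.multinomial Finset.univ k : R) * (List.ofFn fun i : Fin r => A (i : ℕ) ^ k i).prod
      = ((∑ j ∈ univ.filter (fun j : Fin r => k j ≠ 0),
          Nat.multinomial Finset.univ (Function.update k j (k j - 1)) : ℕ) : R) *
          (List.ofFn fun i : Fin r => A (i : ℕ) ^ k i).prod := by
        rw [← multinomial_rec k hk]
    _ = ∑ j ∈ univ.filter (fun j : Fin r => k j ≠ 0),
          (Nat.multinomial Finset.univ (Function.update k j (k j - 1)) : R) *
            (List.ofFn fun i : Fin r => A (i : ℕ) ^ k i).prod := by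
        rw [Nat.cast_sum, Finset.sum_mul]
    _ = _ := by
        refine Finset.sum_congr rfl fun j hj => ?_
        rw [hAP j hj]

lemma rho_succ {R : Type*} [Ring R] {r : ℕ} (A : ℕ → R)
    (hc : ∀ i j : Fin r, Commute (A i) (A j)) {m : ℕ} (hm : r ≤ m) :
    rho r A (m + 1) = ∑ j ∈ Finset.range r, A j * rho r A (m - j) := by
  rw [rho_eq_sum A (by omega : r ≤ m + 1),
    ← Fin.sum_univ_eq_sum_range (fun j => A j * rho r A (m - j)) r]
  have hswap : ∀ (S : Finset (Fin r → ℕ)) (F : Fin r → (Fin r → ℕ) → R),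
      ∑ k ∈ S, ∑ j ∈ univ.filter (fun j : Fin r => k j ≠ 0), F j k
        = ∑ j : Fin r, ∑ k ∈ S.filter (fun k => k j ≠ 0), F j k := by
    intro S F
    calc ∑ k ∈ S, ∑ j ∈ univ.filter (fun j : Fin r => k j ≠ 0), F j k
        = ∑ k ∈ S, ∑ j : Fin r, if k j ≠ 0 then F j k else 0 :=
          Finset.sum_congr rfl fun k _ => Finset.sum_filter _ _
      _ = ∑ j : Fin r, ∑ k ∈ S, if k j ≠ 0 then F j k else 0 := Finset.sum_comm
      _ = _ := Finset.sum_congr rfl fun j _ => (Finset.sum_filter _ _).symm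
  calc ∑ k ∈ (Fintype.piFinset fun _ : Fin r => Finset.range (m + 1 - r + 1)).filter
        (fun k : Fin r → ℕ => ∑ j : Fin r, ((j : ℕ) + 1) * k j = m + 1 - r),
        (Nat.multinomial Finset.univ k : R) * (List.ofFn fun i : Fin r => A (i : ℕ) ^ k i).prod
      = ∑ k ∈ (Fintype.piFinset fun _ : Fin r => Finset.range (m + 1 - r + 1)).filter
          (fun k : Fin r → ℕ => ∑ j : Fin r, ((j : ℕ) + 1) * k j = m + 1 - r),
          ∑ j ∈ univ.filter (fun j : Fin r => k j ≠ 0),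
            (Nat.multinomial Finset.univ (Function.update k j (k j - 1)) : R) *
              (A (j : ℕ) * (List.ofFn fun i : Fin r =>
                A (i : ℕ) ^ (Function.update k j (k j - 1)) i).prod) := by
        refine Finset.sum_congr rfl fun k hk => ?_
        rw [mem_S] at hk
        refine key_step A hc k ?_
        by_contra hno
        push_neg at hno
        have h0 : ∑ j : Fin r, ((j : ℕ) + 1) * k j = 0 :=
          Finset.sum_eq_zero fun i _ => by rw [hno i, mul_zero]
        omega
    _ = ∑ j : Fin r, ∑ k ∈ ((Fintype.piFinset fun _ : Fin r =>
            Finset.range (m + 1 - r + 1)).filter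
          (fun k : Fin r → ℕ => ∑ j : Fin r, ((j : ℕ) + 1) * k j = m + 1 - r)).filter
          (fun k : Fin r → ℕ => k j ≠ 0),
          (Nat.multinomial Finset.univ (Function.update k j (k j - 1)) : R) *
            (A (j : ℕ) * (List.ofFn fun i : Fin r =>
              A (i : ℕ) ^ (Function.update k j (k j - 1)) i).prod) := hswap _ _
    _ = ∑ j : Fin r, A (j : ℕ) * rho r A (m - (j : ℕ)) := by
        refine Finset.sum_congr rfl fun j _ => ?_
        by_cases hj : (j : ℕ) + 1 ≤ m + 1 - r
        · rw [rho_eq_sum A (by omega : r ≤ m - (j : ℕ))]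
          have hidx : m - (j : ℕ) - r = m + 1 - r - 1 - (j : ℕ) := by omega
          rw [hidx, Finset.mul_sum]
          refine Finset.sum_nbij' (fun k => Function.update k j (k j - 1))
            (fun k => Function.update k j (k j + 1)) ?_ ?_ ?_ ?_ ?_
          · -- filter → S (t-1-j)
            intro k hk
            rw [Finset.mem_filter, mem_S] at hk
            rw [mem_S]
            obtain ⟨hwt, hkj⟩ := hk
            have h1 := wt_update k j (k j - 1)
            have h2 := wt_split k j
            have h3 : ((j : ℕ) + 1) * (k j - 1) + ((j : ℕ) + 1) = ((j : ℕ) + 1) * k j := by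
              calc ((j : ℕ) + 1) * (k j - 1) + ((j : ℕ) + 1)
                  = ((j : ℕ) + 1) * ((k j - 1) + 1) := by rw [Nat.mul_add, Nat.mul_one]
                _ = _ := by rw [show k j - 1 + 1 = k j from by
                    have := Nat.pos_of_ne_zero hkj; omega]
            have h4 : ((j : ℕ) + 1) * k j ≤ m + 1 - r := hwt ▸ Finset.single_le_sum
              (f := fun i : Fin r => ((i : ℕ) + 1) * k i) (fun i _ => Nat.zero_le _)
              (Finset.mem_univ j)
            omega
          · -- S (t-1-j) → filter
            intro k hk
            rw [mem_S] at hk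
            rw [Finset.mem_filter, mem_S]
            have h1 := wt_update k j (k j + 1)
            have h2 := wt_split k j
            have h3 : ((j : ℕ) + 1) * (k j + 1) = ((j : ℕ) + 1) * k j + ((j : ℕ) + 1) := by
              rw [Nat.mul_add, Nat.mul_one]
            refine ⟨by omega, by simp⟩
          · -- left inverse
            intro k hk
            rw [Finset.mem_filter] at hk
            have hkj := hk.2
            funext i
            rcases eq_or_ne i j with rfl | h
            · simp
              omega
            · simp [Function.update_of_ne h]
          · -- right inverse
            intro k _
            funext i
            rcases eq_or_ne i j with rfl | h
            · simp
            · simp [Function.update_of_ne h]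
          · -- values agree
            intro k _
            rw [← mul_assoc,
              (Nat.cast_commute (Nat.multinomial Finset.univ
                (Function.update k j (k j - 1))) (A (j : ℕ))).eq, mul_assoc]
        · rw [rho_of_lt A (by omega : m - (j : ℕ) < r), mul_zero]
          rw [Finset.filter_false_of_mem, Finset.sum_empty]
          intro k hk
          rw [mem_S] at hk
          simp only [ne_eq, not_not]
          by_contra hkj
          have h1 : ((j : ℕ) + 1) * k j ≤ m + 1 - r := hk ▸ Finset.single_le_sum
            (f := fun i : Fin r => ((i : ℕ) + 1) * k i) (fun i _ => Nat.zero_le _)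
            (Finset.mem_univ j)
          have h2 : ((j : ℕ) + 1) ≤ ((j : ℕ) + 1) * k j :=
            Nat.le_mul_of_pos_right _ (Nat.pos_of_ne_zero hkj)
          omega

lemma main_aux {R : Type*} [Ring R] {r : ℕ} (hr : 2 ≤ r) (A : ℕ → R)
    (hc : ∀ i j : Fin r, Commute (A (i : ℕ)) (A (j : ℕ)))
    (Y W : ℕ → R)
    (hW : ∀ s < r, W s = ∑ j ∈ Finset.Icc s (r - 1), A j * Y (s + (r - 1 - j)))
    (hrec : ∀ n, r ≤ n → Y n = ∑ j ∈ Finset.range r, A j * Y (n - (j + 1))) :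
    ∀ n, r ≤ n → Y n = ∑ s ∈ Finset.range r, rho r A (n - s) * W s := by
  intro n
  induction n using Nat.strong_induction_on with
  | _ n IH =>
    intro hn
    rcases eq_or_lt_of_le hn with heq | hlt
    · -- base case n = r
      subst heq
      rw [hrec r le_rfl]
      have hRHS : ∑ s ∈ Finset.range r, rho r A (r - s) * W s
          = ∑ j ∈ Finset.range r, A j * Y (r - (j + 1)) := by
        rw [Finset.sum_eq_single_of_mem 0 (Finset.mem_range.2 (by omega)) (fun s hs hne => by
          rw [Finset.mem_range] at hs
          rw [rho_of_lt A (by omega), zero_mul])]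
        rw [Nat.sub_zero, rho_self, one_mul, hW 0 (by omega)]
        rw [show Finset.Icc 0 (r - 1) = Finset.range r from by ext x; simp; omega]
        refine Finset.sum_congr rfl fun j hj => ?_
        rw [Finset.mem_range] at hj
        rw [show 0 + (r - 1 - j) = r - (j + 1) from by omega]
      exact hRHS.symm
    · -- inductive step
      obtain ⟨m, rfl⟩ : ∃ m, n = m + 1 := ⟨n - 1, by omega⟩
      have hm : r ≤ m := by omega
      have hY : Y (m + 1) = ∑ j ∈ Finset.range r, A j * Y (m - j) := by
        rw [hrec (m + 1) (by omega)]
        exact Finset.sum_congr rfl fun j _ => by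
          rw [show m + 1 - (j + 1) = m - j from by omega]
      have hL : ∑ j ∈ Finset.range r, A j * Y (m - j)
          = (∑ j ∈ Finset.range r, ∑ s ∈ Finset.range r,
              (A j * rho r A (m - j - s)) * W s)
            + ∑ j ∈ (Finset.range r).filter (fun j => ¬ r ≤ m - j), A j * Y (m - j) := by
        rw [← Finset.sum_filter_add_sum_filter_not (Finset.range r) (fun j => r ≤ m - j)
          (fun j => A j * Y (m - j))]
        congr 1
        calc ∑ j ∈ (Finset.range r).filter (fun j => r ≤ m - j), A j * Y (m - j)
            = ∑ j ∈ (Finset.range r).filter (fun j => r ≤ m - j),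
                ∑ s ∈ Finset.range r, (A j * rho r A (m - j - s)) * W s := by
              refine Finset.sum_congr rfl fun j hj => ?_
              rw [Finset.mem_filter] at hj
              rw [IH (m - j) (by omega) hj.2, Finset.mul_sum]
              exact Finset.sum_congr rfl fun s _ => (mul_assoc _ _ _).symm
          _ = _ := by
              refine Finset.sum_subset (Finset.filter_subset _ _) fun j hjr hjn => ?_
              have hj2 : ¬ r ≤ m - j := fun h => hjn (Finset.mem_filter.2 ⟨hjr, h⟩)
              refine Finset.sum_eq_zero fun s _ => ?_
              rw [rho_of_lt A (by omega), mul_zero, zero_mul]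
      have hR : ∑ s ∈ Finset.range r, rho r A (m + 1 - s) * W s
          = (∑ j ∈ Finset.range r, ∑ s ∈ Finset.range r,
              (A j * rho r A (m - j - s)) * W s)
            + ∑ s ∈ (Finset.range r).filter (fun s => ¬ s ≤ m - r),
                rho r A (m + 1 - s) * W s := by
        rw [← Finset.sum_filter_add_sum_filter_not (Finset.range r) (fun s => s ≤ m - r)
          (fun s => rho r A (m + 1 - s) * W s)]
        congr 1
        calc ∑ s ∈ (Finset.range r).filter (fun s => s ≤ m - r), rho r A (m + 1 - s) * W s
            = ∑ s ∈ (Finset.range r).filter (fun s => s ≤ m - r),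
                ∑ j ∈ Finset.range r, (A j * rho r A (m - j - s)) * W s := by
              refine Finset.sum_congr rfl fun s hs => ?_
              rw [Finset.mem_filter] at hs
              rw [show m + 1 - s = (m - s) + 1 from by omega,
                rho_succ A hc (by omega : r ≤ m - s), Finset.sum_mul]
              refine Finset.sum_congr rfl fun j _ => ?_
              rw [show m - s - j = m - j - s from by omega]
          _ = ∑ s ∈ Finset.range r, ∑ j ∈ Finset.range r,
                (A j * rho r A (m - j - s)) * W s := by
              refine Finset.sum_subset (Finset.filter_subset _ _) fun s hsr hsn => ?_
              have hs2 : ¬ s ≤ m - r := fun h => hsn (Finset.mem_filter.2 ⟨hsr, h⟩)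
              rw [Finset.mem_range] at hsr
              refine Finset.sum_eq_zero fun j _ => ?_
              rw [rho_of_lt A (by omega), mul_zero, zero_mul]
          _ = _ := Finset.sum_comm
      have hpart2 : ∑ s ∈ (Finset.range r).filter (fun s => ¬ s ≤ m - r),
            rho r A (m + 1 - s) * W s
          = ∑ j ∈ (Finset.range r).filter (fun j => ¬ r ≤ m - j), A j * Y (m - j) := by
        by_cases hcase : m + 1 - r < r
        · calc ∑ s ∈ (Finset.range r).filter (fun s => ¬ s ≤ m - r), rho r A (m + 1 - s) * W s
              = ∑ s ∈ (Finset.range r).filter (fun s => ¬ s ≤ m - r),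
                  if s = m + 1 - r then W s else 0 := by
                refine Finset.sum_congr rfl fun s hs => ?_
                rw [Finset.mem_filter, Finset.mem_range] at hs
                by_cases hseq : s = m + 1 - r
                · rw [if_pos hseq, hseq, show m + 1 - (m + 1 - r) = r from by omega,
                    rho_self, one_mul]
                · rw [if_neg hseq, rho_of_lt A (by omega), zero_mul]
            _ = if m + 1 - r ∈ (Finset.range r).filter (fun s => ¬ s ≤ m - r)
                then W (m + 1 - r) else 0 := Finset.sum_ite_eq' _ _ _
            _ = W (m + 1 - r) := by
                rw [if_pos (by rw [Finset.mem_filter, Finset.mem_range]; omega)]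
            _ = ∑ j ∈ Finset.Icc (m + 1 - r) (r - 1),
                  A j * Y ((m + 1 - r) + (r - 1 - j)) := hW _ hcase
            _ = _ := by
                rw [show (Finset.range r).filter (fun j => ¬ r ≤ m - j)
                    = Finset.Icc (m + 1 - r) (r - 1) from by
                  ext x; simp only [Finset.mem_filter, Finset.mem_range, Finset.mem_Icc]; omega]
                refine Finset.sum_congr rfl fun j hj => ?_
                rw [Finset.mem_Icc] at hj
                rw [show (m + 1 - r) + (r - 1 - j) = m - j from by omega]
        · rw [Finset.filter_false_of_mem (fun s hs => by
              rw [Finset.mem_range] at hs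
              exact fun h => h (by omega)),
            Finset.filter_false_of_mem (fun j hj => by
              rw [Finset.mem_range] at hj
              exact fun h => h (by omega)),
            Finset.sum_empty, Finset.sum_empty]
      rw [hY, hL, hR, hpart2]

/-- Combinatorial formula for a matrix-valued sequence defined by initial matrices
`V₀, …, V_{r-1}` and the recurrence `Y_n = A₀ Y_{n-1} + A₁ Y_{n-2} + ⋯ + A_{r-1} Y_{n-r}`
(`n ≥ r`) with pairwise commuting Hermitian coefficient matrices: for every `n ≥ r`,
`Y_n = Σ_{s=0}^{r-1} ρ(n−s, r; A) W_s` with `W_s = Σ_{j=s}^{r-1} A_j V_{s+r-1-j}`. -/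
theorem matrix_recurrence_combinatorial_formula
    {d r : ℕ} (hd : 1 ≤ d) (hr : 2 ≤ r)
    (A V : ℕ → Matrix (Fin d) (Fin d) ℂ)
    (hherm : ∀ i < r, (A i).IsHermitian)
    (hcomm : ∀ i < r, ∀ j < r, Commute (A i) (A j))
    (Y : ℕ → Matrix (Fin d) (Fin d) ℂ)
    (hinit : ∀ i < r, Y i = V i)
    (hrec : ∀ n : ℕ, r ≤ n → Y n = ∑ j ∈ Finset.range r, A j * Y (n - (j + 1))) :
    ∀ n : ℕ, r ≤ n →
      Y n = ∑ s ∈ Finset.range r, rho r A (n - s) *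
        (∑ j ∈ Finset.Icc s (r - 1), A j * V (s + (r - 1 - j))) := by
  have hcF : ∀ i j : Fin r, Commute (A (i : ℕ)) (A (j : ℕ)) :=
    fun i j => hcomm i i.isLt j j.isLt
  have hW : ∀ s < r, (∑ j ∈ Finset.Icc s (r - 1), A j * V (s + (r - 1 - j)))
      = ∑ j ∈ Finset.Icc s (r - 1), A j * Y (s + (r - 1 - j)) := by
    intro s hs
    refine Finset.sum_congr rfl fun j hj => ?_
    rw [Finset.mem_Icc] at hj
    rw [hinit (s + (r - 1 - j)) (by omega)]
  exact main_aux hr A hcF Y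
    (fun s => ∑ j ∈ Finset.Icc s (r - 1), A j * V (s + (r - 1 - j))) hW hrec
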